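/- (Lemme 4, specialized to K = ℚ_p, d = p, r = 0) Let p be an odd prime, let e₁, e₂ ∈ ℤ_p be units, and let x ∈ ℤ_p be a unit whose residue t in ZMod p (via the reduction map ℤ_p → ZMod p) is distinct from the residues ε₁ of e₁ and ε₂ of e₂. Then there exist y, z ∈ ℚ_p with y² − p·z² = x·(x − e₁)·(x − e₂) if and only if t·(t − ε₁)·(t − ε₂) is a square in ZMod p. -/

import Mathlib

section aux
variable {p : ℕ} [Fact p.Prime]

lemma padic_isUnit_of_toZMod_ne_zero {z : ℤ_[p]} (h : PadicInt.toZMod z ≠ 0) : IsUnit z := by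
  by_contra hu
  apply h
  have hm : z ∈ IsLocalRing.maximalIdeal ℤ_[p] := by
    rw [IsLocalRing.mem_maximalIdeal]; exact hu
  rw [← PadicInt.ker_toZMod] at hm
  exact hm

lemma padic_toZMod_ne_zero_of_isUnit {z : ℤ_[p]} (h : IsUnit z) : PadicInt.toZMod z ≠ 0 :=
  (h.map (PadicInt.toZMod (p := p))).ne_zero

lemma padic_norms_ne {y z : ℚ_[p]} (hy : y ≠ 0) (hz : z ≠ 0) :
    ‖y ^ 2‖ ≠ ‖(p : ℚ_[p]) * z ^ 2‖ := by
  have hp0 : (0 : ℝ) < p := by exact_mod_cast (Fact.out : p.Prime).pos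
  have hp1 : (p : ℝ) ≠ 1 := by exact_mod_cast (Fact.out : p.Prime).ne_one
  have hpq : (p : ℚ_[p]) ≠ 0 := by exact_mod_cast (Fact.out : p.Prime).ne_zero
  have hy2 : y ^ 2 ≠ 0 := pow_ne_zero _ hy
  have hz2 : z ^ 2 ≠ 0 := pow_ne_zero _ hz
  have hv1 : (y ^ 2).valuation = 2 * y.valuation := by
    rw [sq, Padic.valuation_mul hy hy]; ring
  have hv2 : ((p : ℚ_[p]) * z ^ 2).valuation = 1 + 2 * z.valuation := by
    rw [Padic.valuation_mul hpq hz2, Padic.valuation_p, sq,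
      Padic.valuation_mul hz hz]; ring
  rw [Padic.norm_eq_zpow_neg_valuation hy2, Padic.norm_eq_zpow_neg_valuation (mul_ne_zero hpq hz2), hv1, hv2]
  intro h
  rw [zpow_right_inj₀ hp0 hp1] at h
  omega

lemma padic_bound {y z : ℚ_[p]} (h : ‖y ^ 2 - p * z ^ 2‖ ≤ 1) : ‖y‖ ≤ 1 ∧ ‖z‖ ≤ 1 := by
  have hp0 : (0 : ℝ) < p := by exact_mod_cast (Fact.out : p.Prime).pos
  have hp1 : (1 : ℝ) < p := by exact_mod_cast (Fact.out : p.Prime).one_lt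
  have key : ‖y ^ 2‖ ≤ 1 ∧ ‖(p : ℚ_[p]) * z ^ 2‖ ≤ 1 := by
    by_cases hy : y = 0
    · constructor
      · simp [hy]
      · simpa [hy] using h
    by_cases hz : z = 0
    · constructor
      · simpa [hz] using h
      · simp [hz]
    have hne : ‖y ^ 2‖ ≠ ‖-((p : ℚ_[p]) * z ^ 2)‖ := by
      rw [norm_neg]; exact padic_norms_ne hy hz
    have := Padic.add_eq_max_of_ne hne
    rw [← sub_eq_add_neg] at this
    rw [this, norm_neg] at h
    exact ⟨le_trans (le_max_left _ _) h, le_trans (le_max_right _ _) h⟩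
  constructor
  · have := key.1
    rw [norm_pow] at this
    exact pow_le_one_iff_of_nonneg (norm_nonneg y) two_ne_zero |>.mp this
  · by_cases hz : z = 0
    · simp [hz]
    have hpq : (p : ℚ_[p]) ≠ 0 := by exact_mod_cast (Fact.out : p.Prime).ne_zero
    have hz2 : z ^ 2 ≠ 0 := pow_ne_zero _ hz
    have hv2 : ((p : ℚ_[p]) * z ^ 2).valuation = 1 + 2 * z.valuation := by
      rw [Padic.valuation_mul hpq hz2, Padic.valuation_p, sq,
        Padic.valuation_mul hz hz]; ring
    have := key.2
    rw [Padic.norm_eq_zpow_neg_valuation (mul_ne_zero hpq hz2), hv2, ← zpow_zero (p : ℝ),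
      zpow_le_zpow_iff_right₀ hp1] at this
    have hb : 0 ≤ z.valuation := by omega
    rw [Padic.norm_eq_zpow_neg_valuation hz, ← zpow_zero (p : ℝ), zpow_le_zpow_iff_right₀ hp1]
    omega

/-- Hensel: a unit with square nonzero residue is a square in `ℤ_p` (p odd). -/
lemma padic_sq_of_residue_sq (hp : p ≠ 2) {u : ℤ_[p]} {b : ZMod p} (hb : b ≠ 0)
    (hub : PadicInt.toZMod u = b * b) : ∃ w : ℤ_[p], w ^ 2 = u := by
  set F : Polynomial ℤ_[p] := Polynomial.X ^ 2 - Polynomial.C u with hF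
  set a : ℤ_[p] := (b.val : ℤ_[p]) with ha
  have hta : PadicInt.toZMod a = b := by
    rw [ha, map_natCast, ZMod.natCast_val, ZMod.cast_id]
  have hau : IsUnit a := padic_isUnit_of_toZMod_ne_zero (by rw [hta]; exact hb)
  have h2u : IsUnit (2 : ℤ_[p]) := by
    apply padic_isUnit_of_toZMod_ne_zero
    have h2 : (2 : ℤ_[p]) = ((2 : ℕ) : ℤ_[p]) := by norm_num
    rw [h2, map_natCast, Ne, ZMod.natCast_eq_zero_iff]
    exact fun hd => hp ((Nat.prime_dvd_prime_iff_eq Fact.out Nat.prime_two).mp hd)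
  have hevald : F.derivative.eval a = 2 * a := by
    simp [hF, Polynomial.derivative_pow]
  have heval : F.eval a = a ^ 2 - u := by simp [hF]
  have hnormd : ‖F.derivative.eval a‖ = 1 := by
    rw [hevald, norm_mul, PadicInt.isUnit_iff.mp h2u, PadicInt.isUnit_iff.mp hau]
    norm_num
  have hnorm : ‖F.eval a‖ < ‖F.derivative.eval a‖ ^ 2 := by
    rw [hnormd, one_pow, heval]
    rw [← PadicInt.mem_nonunits, ← IsLocalRing.mem_maximalIdeal, ← PadicInt.ker_toZMod,
      RingHom.mem_ker, map_sub, map_pow, hta, hub, sq, sub_self]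
  obtain ⟨w, hw, -⟩ := hensels_lemma (F := F) (a := a) hnorm
  refine ⟨w, ?_⟩
  rw [hF] at hw
  simp only [Polynomial.coe_aeval_eq_eval, Polynomial.eval_sub, Polynomial.eval_pow, Polynomial.eval_X,
    Polynomial.eval_C, sub_eq_zero] at hw
  exact hw

end aux

/-- (Lemme 4, specialized to `K = ℚ_p`, `d = p`, `r = 0`) For units `e₁, e₂, x` of
`ℤ_p` (p odd) whose residues are `ε₁, ε₂, t` with `t ≠ ε₁` and `t ≠ ε₂`, the element
`x·(x − e₁)·(x − e₂)` is of the form `y² − p·z²` with `y, z ∈ ℚ_p` if and only if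
`t·(t − ε₁)·(t − ε₂)` is a square in `ZMod p`. -/
theorem lemme4_Qp (p : ℕ) [Fact p.Prime] (hp : p ≠ 2)
    (e₁ e₂ x : ℤ_[p]) (he₁ : IsUnit e₁) (he₂ : IsUnit e₂) (hx : IsUnit x)
    (ht₁ : PadicInt.toZMod x ≠ PadicInt.toZMod e₁)
    (ht₂ : PadicInt.toZMod x ≠ PadicInt.toZMod e₂) :
    (∃ y z : ℚ_[p], y ^ 2 - p * z ^ 2 = ((x * (x - e₁) * (x - e₂) : ℤ_[p]) : ℚ_[p])) ↔
      IsSquare (PadicInt.toZMod x * (PadicInt.toZMod x - PadicInt.toZMod e₁) *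
        (PadicInt.toZMod x - PadicInt.toZMod e₂)) := by
  set u : ℤ_[p] := x * (x - e₁) * (x - e₂) with hu
  have hut : PadicInt.toZMod u = PadicInt.toZMod x *
      (PadicInt.toZMod x - PadicInt.toZMod e₁) *
      (PadicInt.toZMod x - PadicInt.toZMod e₂) := by
    rw [hu]; push_cast [map_mul, map_sub]; ring
  have hutne : PadicInt.toZMod u ≠ 0 := by
    rw [hut]
    exact mul_ne_zero (mul_ne_zero (padic_toZMod_ne_zero_of_isUnit hx)
      (sub_ne_zero.mpr ht₁)) (sub_ne_zero.mpr ht₂)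
  constructor
  · rintro ⟨y, z, h⟩
    have hle : ‖y ^ 2 - p * z ^ 2‖ ≤ 1 := by
      rw [h, ← PadicInt.norm_def]
      exact PadicInt.norm_le_one u
    obtain ⟨hy, hz⟩ := padic_bound hle
    set Y : ℤ_[p] := ⟨y, hy⟩ with hY
    set Z : ℤ_[p] := ⟨z, hz⟩ with hZ
    have hYZ : Y ^ 2 - p * Z ^ 2 = u := by
      apply Subtype.ext
      push_cast
      exact h
    have : PadicInt.toZMod u = (PadicInt.toZMod Y) ^ 2 := by
      rw [← hYZ, map_sub, map_mul, map_pow, map_pow, map_natCast, ZMod.natCast_self,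
        zero_mul, sub_zero]
    rw [← hut, this]
    exact ⟨PadicInt.toZMod Y, sq _⟩
  · rintro hsq
    rw [← hut] at hsq
    obtain ⟨b, hb⟩ := hsq
    have hbne : b ≠ 0 := by
      intro h0
      rw [h0, mul_zero] at hb
      exact hutne hb
    obtain ⟨w, hw⟩ := padic_sq_of_residue_sq hp hbne hb
    refine ⟨(w : ℚ_[p]), 0, ?_⟩
    rw [← hw]
    push_cast
    ring
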